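/- arXiv:1703.04948 — 4 statements merged into one kernel-verified Lean document; each statement's English description precedes it below -/
import Mathlib

section
/- Let Φ = A ⊕ C (i.e. Φ(x,z) = (Ax, Cz)) be a Lie algebra isomorphism N_{r,s}(U) → N_{r̃,s̃}(Ũ). Then A^τ J̃_w A = J_{C^τ(w)} for all w ∈ ℝ^{r̃,s̃}, where A^τ and C^τ are the adjoints with respect to the scalar products ⟨·,·⟩_U, ⟨·,·⟩_Ũ and ⟨·,·⟩_{r,s}, ⟨·,·⟩_{r̃,s̃}. -/
/-- If `Φ = A ⊕ C` (`Φ(x,z) = (Ax,Cz)`) is a Lie algebra isomorphism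
`N_{r,s}(U) → N_{r̃,s̃}(Ũ)`, then `A^τ J̃_w A = J_{C^τ(w)}` for all `w ∈ ℝ^{r̃,s̃}`,
where `A^τ, C^τ` are the adjoints with respect to the scalar products.  The brackets are
determined by `⟨J_z x,y⟩_U = ⟨z,[x,y]⟩_{r,s}` and `Φ` being a Lie homomorphism means
`[Ax,Ay]~ = C[x,y]`. -/
theorem stmt_7 {Z U Z' U' : Type*}
    [AddCommGroup Z] [Module ℝ Z] [AddCommGroup U] [Module ℝ U]
    [AddCommGroup Z'] [Module ℝ Z'] [AddCommGroup U'] [Module ℝ U']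
    (gZ : Z →ₗ[ℝ] Z →ₗ[ℝ] ℝ) (gZ' : Z' →ₗ[ℝ] Z' →ₗ[ℝ] ℝ)
    (gZsymm : ∀ z w : Z, gZ z w = gZ w z)
    (gZ'symm : ∀ z w : Z', gZ' z w = gZ' w z)
    (BU : U →ₗ[ℝ] U →ₗ[ℝ] ℝ) (BU' : U' →ₗ[ℝ] U' →ₗ[ℝ] ℝ)
    (hndU : ∀ x : U, (∀ y : U, BU x y = 0) → x = 0)
    (hsymmU : ∀ x y : U, BU x y = BU y x)
    (hsymmU' : ∀ x y : U', BU' x y = BU' y x)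
    (J : Z →ₗ[ℝ] Module.End ℝ U) (J' : Z' →ₗ[ℝ] Module.End ℝ U')
    (br : U →ₗ[ℝ] U →ₗ[ℝ] Z) (br' : U' →ₗ[ℝ] U' →ₗ[ℝ] Z')
    (hbr : ∀ (z : Z) (x y : U), BU (J z x) y = gZ z (br x y))
    (hbr' : ∀ (w : Z') (x y : U'), BU' (J' w x) y = gZ' w (br' x y))
    (A : U →ₗ[ℝ] U') (C : Z →ₗ[ℝ] Z')
    (hA : Function.Bijective A) (hC : Function.Bijective C)
    (hhom : ∀ x y : U, br' (A x) (A y) = C (br x y))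
    (Aτ : U' →ₗ[ℝ] U) (hAτ : ∀ (x : U) (y' : U'), BU' (A x) y' = BU x (Aτ y'))
    (Cτ : Z' →ₗ[ℝ] Z) (hCτ : ∀ (z : Z) (w' : Z'), gZ' (C z) w' = gZ z (Cτ w')) :
    ∀ (w : Z') (x : U), Aτ (J' w (A x)) = J (Cτ w) x := by
  intro w x
  have key : ∀ y : U, BU (Aτ (J' w (A x)) - J (Cτ w) x) y = 0 := by
    intro y
    have h1 : BU (Aτ (J' w (A x))) y = BU' (J' w (A x)) (A y) := by
      rw [hsymmU, ← hAτ, hsymmU']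
    have h2 : BU' (J' w (A x)) (A y) = gZ' w (br' (A x) (A y)) := hbr' w (A x) (A y)
    have h3 : gZ' w (br' (A x) (A y)) = gZ (Cτ w) (br x y) := by
      rw [hhom, gZ'symm, hCτ, gZsymm]
    have h4 : BU (J (Cτ w) x) y = gZ (Cτ w) (br x y) := hbr _ _ _
    simp only [map_sub, LinearMap.sub_apply]
    rw [h1, h2, h3, ← h4]
    ring
  have := hndU _ key
  exact sub_eq_zero.mp this
end

section
/- Let φ = x₁⋯x_{2p}·y₁⋯y_q ∈ Spin(r)×Pin(s) ⊂ Pin(r,s) act on an admissible Cl(r,s)-module U. Then the pair (J_{φ^{-1}}, (Ãd_φ)^τ) is a restricted automorphism of N_{r,s}(U): it satisfies (J_{φ^{-1}})^τ J_z J_{φ^{-1}} = J_{(Ãd_φ)(z)} for all z ∈ ℝ^{r,s}, where Ãd_φ(z) = α(φ) z φ^{-1} is the twisted adjoint action. -/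
open CliffordAlgebra

/-- Let `φ = x₁⋯x_{2p}·y₁⋯y_q ∈ Spin(r)×Pin(s) ⊂ Pin(r,s)` (an even number
of positive unit vectors, any number of negative ones) act on an admissible
`Cl(r,s)`-module `U`.  Then `(J_{φ⁻¹}, (Ãd_φ)^τ)` is a restricted automorphism of
`N_{r,s}(U)`:  `(J_{φ⁻¹})^τ J_z J_{φ⁻¹} = J_{Ãd_φ(z)}` for all `z ∈ ℝ^{r,s}`, where
`Ãd_φ(z) = α(φ) z φ⁻¹`.  Equivalently (using the adjoint with respect to `⟨·,·⟩_U`):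
whenever `α(φ)·ι(z)·φ⁻¹ = ι(w)`, one has
`⟨J_z J_{φ⁻¹} x, J_{φ⁻¹} y⟩_U = ⟨J_w x, y⟩_U`, and `(J_{φ⁻¹})^τ = J_{α(φ)}`. -/
theorem stmt_14 {Z U : Type*} [AddCommGroup Z] [Module ℝ Z]
    [AddCommGroup U] [Module ℝ U]
    (g : Z →ₗ[ℝ] Z →ₗ[ℝ] ℝ)
    (gsymm : ∀ z w : Z, g z w = g w z)
    (Q : QuadraticForm ℝ Z) (hQ : ∀ z : Z, Q z = - g z z)
    (ρ : CliffordAlgebra Q →ₐ[ℝ] Module.End ℝ U)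
    (B : U →ₗ[ℝ] U →ₗ[ℝ] ℝ)
    (hnd : ∀ x : U, (∀ y : U, B x y = 0) → x = 0)
    (hsymm : ∀ x y : U, B x y = B y x)
    (hskew : ∀ (z : Z) (x y : U), B (ρ (ι Q z) x) y + B x (ρ (ι Q z) y) = 0)
    (p : ℕ) (xs ys : List Z)
    (hxslen : xs.length = 2 * p)
    (hxsunit : ∀ v ∈ xs, g v v = 1)
    (hysunit : ∀ v ∈ ys, g v v = -1)
    (φ : CliffordAlgebra Q)
    (hφ : φ = (xs.map (ι Q)).prod * (ys.map (ι Q)).prod)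
    (φinv : CliffordAlgebra Q)
    (hφinv : φ * φinv = 1 ∧ φinv * φ = 1) :
    (∀ x y : U, B (ρ φinv x) y = B x (ρ (involute φ) y)) ∧
    (∀ z w : Z, involute φ * ι Q z * φinv = ι Q w →
      ∀ x y : U, B (ρ (ι Q z) (ρ φinv x)) (ρ φinv y) = B (ρ (ι Q w) x) y) := by

  obtain ⟨h1, h2⟩ := hφinv
  set L := xs ++ ys with hL
  -- product with reversed list gives a scalar
  have prodA : ∀ (M : List Z), (M.map (ι Q)).prod * (M.reverse.map (ι Q)).prod
      = algebraMap ℝ (CliffordAlgebra Q) ((M.map Q).prod) := by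
    intro M
    induction M with
    | nil => simp
    | cons a t ih =>
      rw [List.reverse_cons, List.map_append, List.prod_append, List.map_cons,
        List.prod_cons]
      simp only [List.map_cons, List.map_nil, List.prod_cons, List.prod_nil, mul_one]
      rw [mul_assoc, ← mul_assoc ((t.map (ι Q)).prod), ih, ← mul_assoc,
        ← Algebra.commutes, mul_assoc, ι_sq_scalar, ← map_mul]
      ring_nf
  -- adjoint of a product of vectors
  have adj : ∀ (M : List Z) (x y : U),
      B (ρ ((M.map (ι Q)).prod) x) y
        = (-1:ℝ)^M.length * B x (ρ ((M.reverse.map (ι Q)).prod) y) := by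
    intro M
    induction M with
    | nil => intro x y; simp
    | cons a t ih =>
      intro x y
      rw [List.map_cons, List.prod_cons, map_mul]
      have hs : B (ρ (ι Q a) ((ρ ((t.map (ι Q)).prod)) x)) y
          = - B ((ρ ((t.map (ι Q)).prod)) x) (ρ (ι Q a) y) := by
        have := hskew a ((ρ ((t.map (ι Q)).prod)) x) y
        linarith
      rw [Module.End.mul_apply, hs, ih]
      rw [List.reverse_cons, List.map_append, List.prod_append, map_mul]
      simp only [List.map_cons, List.map_nil, List.prod_cons, List.prod_nil, mul_one,
        Module.End.mul_apply, List.length_cons]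
      ring
  -- grade involution on a product of vectors
  have invo : ∀ (M : List Z), involute ((M.map (ι Q)).prod)
      = (-1:ℝ)^M.length • (M.map (ι Q)).prod := by
    intro M
    induction M with
    | nil => simp
    | cons a t ih =>
      rw [List.map_cons, List.prod_cons, map_mul, involute_ι, ih, List.length_cons,
        pow_succ, mul_smul, neg_mul, mul_smul_comm]
      rw [neg_one_smul, smul_neg]
  have hφL : φ = (L.map (ι Q)).prod := by
    rw [hφ, hL, List.map_append, List.prod_append]
  have hQprod : ((L.map Q).prod) = 1 := by
    have hx : ((xs.map Q).prod) = (-1:ℝ) ^ xs.length := by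
      rw [← (List.length_map (⇑Q) : (xs.map Q).length = xs.length)]
      apply List.prod_eq_pow_card
      intro x hx
      obtain ⟨v, hv, rfl⟩ := List.mem_map.1 hx
      rw [hQ, hxsunit v hv]
    have hy : ((ys.map Q).prod) = 1 := by
      apply List.prod_eq_one
      intro x hx
      obtain ⟨v, hv, rfl⟩ := List.mem_map.1 hx
      rw [hQ, hysunit v hv]; norm_num
    rw [hL, List.map_append, List.prod_append, hx, hy, hxslen]
    rw [pow_mul]
    norm_num
  have hrev : φ * (L.reverse.map (ι Q)).prod = 1 := by
    rw [hφL, prodA, hQprod, map_one]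
  have hinv : φinv = (L.reverse.map (ι Q)).prod := by
    calc φinv = φinv * (φ * (L.reverse.map (ι Q)).prod) := by rw [hrev, mul_one]
      _ = (φinv * φ) * (L.reverse.map (ι Q)).prod := by rw [mul_assoc]
      _ = (L.reverse.map (ι Q)).prod := by rw [h2, one_mul]
  have part1 : ∀ x y : U, B (ρ φinv x) y = B x (ρ (involute φ) y) := by
    intro x y
    rw [hinv, adj, List.reverse_reverse, List.length_reverse, hφL, invo, map_smul]
    simp [smul_eq_mul]
  refine ⟨part1, ?_⟩
  intro z w hw x y
  have hcomp : ρ (ι Q w) = ρ (involute φ) * ρ (ι Q z) * ρ φinv := by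
    rw [← map_mul, ← map_mul, hw]
  calc B (ρ (ι Q z) (ρ φinv x)) (ρ φinv y)
      = B (ρ φinv y) (ρ (ι Q z) (ρ φinv x)) := hsymm _ _
    _ = B y (ρ (involute φ) (ρ (ι Q z) (ρ φinv x))) := part1 _ _
    _ = B (ρ (involute φ) (ρ (ι Q z) (ρ φinv x))) y := hsymm _ _
    _ = B (ρ (ι Q w) x) y := by rw [hcomp]; simp [Module.End.mul_apply]
end

section
/- For a unit vector v ∈ ℝ^{r,s} with ⟨v,v⟩_{r,s} = −1 acting on an admissible Cl(r,s)-module U, the map J_v is skew-symmetric and satisfies J_v^τ = J_{α(v)} = J_{-v}, and hence (J_{v^{-1}}, (Ãd_v)^τ) is a restricted automorphism of N_{r,s}(U). In contrast, for a unit vector v with ⟨v,v⟩_{r,s} = 1 one has J_{v^{-1}}^τ = J_v ≠ J_{α(v)} (for v ≠ 0), so the corresponding pair fails the automorphism condition. -/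
open CliffordAlgebra

/-- For a unit vector `v ∈ ℝ^{r,s}` with `⟨v,v⟩_{r,s} = −1` acting on an
admissible `Cl(r,s)`-module `U` (then `v⁻¹ = v`), `J_v` is skew-symmetric, its adjoint is
`J_v^τ = J_{α(v)} = J_{−v}`, and `(J_{v⁻¹}, (Ãd_v)^τ)` is a restricted automorphism of
`N_{r,s}(U)`: `⟨J_z J_v x, J_v y⟩_U = ⟨J_{Ãd_v(z)} x, y⟩_U` with
`Ãd_v(z) = z − 2(⟨z,v⟩/⟨v,v⟩)v`.  In contrast, for `⟨v,v⟩_{r,s} = 1` (then `v⁻¹ = −v`)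
one has `J_{v⁻¹}^τ = J_v ≠ J_{α(v)}` when `v ≠ 0`.  (Clifford convention:
`Q z = −⟨z,z⟩_{r,s}`.) -/
theorem stmt_15 {Z U : Type*} [AddCommGroup Z] [Module ℝ Z]
    [AddCommGroup U] [Module ℝ U] [Nontrivial U]
    (g : Z →ₗ[ℝ] Z →ₗ[ℝ] ℝ)
    (gsymm : ∀ z w : Z, g z w = g w z)
    (Q : QuadraticForm ℝ Z) (hQ : ∀ z : Z, Q z = - g z z)
    (ρ : CliffordAlgebra Q →ₐ[ℝ] Module.End ℝ U)
    (B : U →ₗ[ℝ] U →ₗ[ℝ] ℝ)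
    (hnd : ∀ x : U, (∀ y : U, B x y = 0) → x = 0)
    (hsymm : ∀ x y : U, B x y = B y x)
    (hskew : ∀ (z : Z) (x y : U), B (ρ (ι Q z) x) y + B x (ρ (ι Q z) y) = 0) :
    (∀ v : Z, g v v = -1 →
      -- J_v is skew-symmetric
      (∀ x y : U, B (ρ (ι Q v) x) y + B x (ρ (ι Q v) y) = 0) ∧
      -- J_v^τ = J_{α(v)} = J_{-v}
      (∀ x y : U, B (ρ (ι Q v) x) y = B x (ρ (ι Q (-v)) y)) ∧
      -- (J_{v⁻¹}, (Ãd_v)^τ) is a restricted automorphism (here v⁻¹ = v)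
      (∀ (z : Z) (x y : U),
        B (ρ (ι Q z) (ρ (ι Q v) x)) (ρ (ι Q v) y)
          = B (ρ (ι Q (z - (2 * (g z v / g v v)) • v)) x) y)) ∧
    (∀ v : Z, g v v = 1 →
      -- J_{v⁻¹}^τ = J_v  (here v⁻¹ = −v)
      (∀ x y : U, B (ρ (ι Q (-v)) x) y = B x (ρ (ι Q v) y)) ∧
      -- but J_v ≠ J_{α(v)} for v ≠ 0
      (v ≠ 0 → ρ (ι Q v) ≠ ρ (ι Q (-v)))) := by
  have hflip : ∀ (z : Z) (x y : U), B x (ρ (ι Q z) y) = - B (ρ (ι Q z) x) y := by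
    intro z x y
    have := hskew z x y
    linarith
  have hpolar : ∀ z v : Z, QuadraticMap.polar Q z v = -(2 * g z v) := by
    intro z v
    simp only [QuadraticMap.polar, hQ, map_add, LinearMap.add_apply]
    rw [gsymm v z]
    ring
  constructor
  · intro v hv
    have hQv : Q v = 1 := by rw [hQ v, hv]; norm_num
    refine ⟨fun x y => hskew v x y, ?_, ?_⟩
    · intro x y
      rw [map_neg, map_neg, LinearMap.neg_apply, map_neg, hflip v x y, neg_neg]
    · intro z x y
      have h1 : ι Q v * ι Q z = algebraMap ℝ _ (QuadraticMap.polar Q z v) - ι Q z * ι Q v :=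
        eq_sub_of_add_eq' (ι_mul_ι_add_swap z v)
      have halg : ι Q v * (ι Q z * ι Q v)
          = algebraMap ℝ _ (QuadraticMap.polar Q z v) * ι Q v
            - algebraMap ℝ _ (Q v) * ι Q z := by
        rw [← mul_assoc, h1, sub_mul, mul_assoc, ι_sq_scalar, ← Algebra.commutes]
      have hop : ∀ u : U, ρ (ι Q v) (ρ (ι Q z) (ρ (ι Q v) u))
          = (-(2 * g z v)) • ρ (ι Q v) u - ρ (ι Q z) u := by
        intro u
        have := congrArg (fun A : Module.End ℝ U => A u) (congrArg ρ halg)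
        simp only [map_mul, map_sub, Module.End.mul_apply, LinearMap.sub_apply, AlgHom.commutes,
          Module.algebraMap_end_apply, hQv, hpolar, one_smul] at this
        exact this
      have hz' : z - (2 * (g z v / g v v)) • v = z + (2 * g z v) • v := by
        rw [hv, show (2 : ℝ) * (g z v / (-1)) = -(2 * g z v) by ring]
        module
      rw [hz', hflip v (ρ (ι Q z) (ρ (ι Q v) x)) y, hop x]
      simp only [map_add, map_smul, map_sub, LinearMap.add_apply, LinearMap.smul_apply,
        LinearMap.sub_apply, LinearMap.neg_apply, smul_eq_mul, map_neg]
      ring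
  · intro v hv
    have hQv : Q v = -1 := by rw [hQ v, hv]
    constructor
    · intro x y
      simp only [map_neg, LinearMap.neg_apply]
      have := hskew v x y
      linarith
    · intro hv0 heq
      rw [map_neg, map_neg] at heq
      have h4 : ρ (ι Q v) + ρ (ι Q v) = 0 := add_eq_zero_iff_eq_neg.mpr heq
      have h2 : ρ (ι Q v) = 0 := by
        have h5 : (2 : ℝ) • ρ (ι Q v) = 0 := by rw [two_smul]; exact h4
        exact (smul_eq_zero.mp h5).resolve_left (by norm_num)
      obtain ⟨x, hx⟩ := exists_ne (0 : U)
      have h6 : ρ (ι Q v) (ρ (ι Q v) x) = Q v • x := by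
        rw [← Module.End.mul_apply, ← map_mul, ι_sq_scalar, AlgHom.commutes,
          Module.algebraMap_end_apply]
      rw [h2, hQv] at h6
      simp at h6
      exact hx h6
end

section
/- Let (V, ⟨·,·⟩_V) be a module with nondegenerate symmetric bilinear form and let Λ₁,…,Λ_l be symmetric linear operators on V satisfying Λ_k² = −Id and Λ_k Λ_j = −Λ_j Λ_k for k ≠ j. Then for any w ∈ V with ⟨w,w⟩_V = 1 there exists w̃ ∈ V with ⟨w̃,w̃⟩_V = 1 and ⟨w̃, Λ_k w̃⟩_V = 0 for all k = 1,…,l. -/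
/-- Let `(V,⟨·,·⟩_V)` be a (finite-dimensional real) space with nondegenerate
symmetric bilinear form and `Λ₁,…,Λ_l` symmetric operators with `Λ_k² = −Id` and
`Λ_k Λ_j = −Λ_j Λ_k` for `k ≠ j`.  Then for any `w` with `⟨w,w⟩_V = 1` there exists `w̃`
with `⟨w̃,w̃⟩_V = 1` and `⟨w̃, Λ_k w̃⟩_V = 0` for all `k`. -/
theorem stmt_16 {V : Type*} [AddCommGroup V] [Module ℝ V] [FiniteDimensional ℝ V]
    (B : V →ₗ[ℝ] V →ₗ[ℝ] ℝ)
    (hnd : ∀ x : V, (∀ y : V, B x y = 0) → x = 0)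
    (hsymm : ∀ x y : V, B x y = B y x)
    (l : ℕ) (Λ : Fin l → Module.End ℝ V)
    (hΛsym : ∀ (k : Fin l) (x y : V), B (Λ k x) y = B x (Λ k y))
    (hΛsq : ∀ k : Fin l, Λ k * Λ k = -1)
    (hΛanti : ∀ k j : Fin l, k ≠ j → Λ k * Λ j = -(Λ j * Λ k))
    (w : V) (hw : B w w = 1) :
    ∃ w' : V, B w' w' = 1 ∧ ∀ k : Fin l, B w' (Λ k w') = 0 := by
  -- pointwise versions of the algebraic hypotheses
  have hsq : ∀ (k : Fin l) (x : V), Λ k (Λ k x) = -x := by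
    intro k x
    have h := LinearMap.ext_iff.mp (hΛsq k) x
    simpa [Module.End.mul_apply] using h
  have hanti : ∀ (k j : Fin l), k ≠ j → ∀ x : V, Λ k (Λ j x) = -(Λ j (Λ k x)) := by
    intro k j hkj x
    have h := LinearMap.ext_iff.mp (hΛanti k j hkj) x
    simpa [Module.End.mul_apply] using h
  suffices h : ∀ S : Finset (Fin l), ∃ w' : V, B w' w' = 1 ∧ ∀ k ∈ S, B w' (Λ k w') = 0 by
    obtain ⟨w', h1, h2⟩ := h Finset.univ
    exact ⟨w', h1, fun k => h2 k (Finset.mem_univ k)⟩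
  intro S
  induction S using Finset.induction_on with
  | empty => exact ⟨w, hw, by simp⟩
  | @insert k S hkS ih =>
    obtain ⟨u, hu1, hu2⟩ := ih
    set a : ℝ := B u (Λ k u) with ha
    set s : ℝ := Real.sqrt (1 + a ^ 2) with hsdef
    have hs2 : s ^ 2 = 1 + a ^ 2 := Real.sq_sqrt (by positivity)
    have hs1 : 1 ≤ s := by
      nlinarith [Real.sqrt_nonneg (1 + a ^ 2)]
    have hspos : 0 < s := lt_of_lt_of_le one_pos hs1
    set α : ℝ := Real.sqrt ((s + 1) / (2 * s ^ 2)) with hαdef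
    have hα2 : α ^ 2 = (s + 1) / (2 * s ^ 2) := Real.sq_sqrt (by positivity)
    have hαpos : 0 < α := Real.sqrt_pos.mpr (by positivity)
    set β : ℝ := a / (2 * α * s ^ 2) with hβdef
    -- key scalar identities
    have hαne : α ≠ 0 := ne_of_gt hαpos
    have hsne : s ≠ 0 := ne_of_gt hspos
    have hs1ne : s + 1 ≠ 0 := by positivity
    have ha2 : a ^ 2 = s ^ 2 - 1 := by linarith [hs2]
    have key1 : 2 * α * β = a / s ^ 2 := by
      rw [hβdef]; field_simp
    have hβ2 : β ^ 2 = (s - 1) / (2 * s ^ 2) := by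
      rw [hβdef, div_pow, ha2, show (2 * α * s ^ 2) ^ 2 = 4 * α ^ 2 * (s ^ 2) ^ 2 by ring, hα2]
      field_simp
      ring
    have key2 : α ^ 2 - β ^ 2 = 1 / s ^ 2 := by
      rw [hα2, hβ2]; field_simp; ring
    -- bilinear form values
    have hBΛΛ : B (Λ k u) (Λ k u) = -1 := by
      rw [hΛsym, hsq, map_neg, hu1]
    have hBΛu : B (Λ k u) u = a := by rw [hsymm]
    refine ⟨α • u + β • Λ k u, ?_, ?_⟩
    · have expand : B (α • u + β • Λ k u) (α • u + β • Λ k u)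
        = α ^ 2 - β ^ 2 + 2 * α * β * a := by
        simp only [map_add, map_smul, LinearMap.add_apply, LinearMap.smul_apply,
          smul_eq_mul, hu1, hBΛΛ, hBΛu, ← ha]
        ring
      rw [expand, key1, key2]
      field_simp
      nlinarith [hs2]
    · intro j hj
      rcases Finset.mem_insert.mp hj with rfl | hjS
      · -- the new index
        have hΛw' : Λ j (α • u + β • Λ j u) = α • Λ j u + β • (-u) := by
          rw [map_add, map_smul, map_smul, hsq]
        rw [hΛw']
        have expand : B (α • u + β • Λ j u) (α • Λ j u + β • (-u))
          = a * (α ^ 2 - β ^ 2) - 2 * α * β := by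
          simp only [map_add, map_smul, map_neg, LinearMap.add_apply, LinearMap.smul_apply,
            LinearMap.neg_apply, smul_eq_mul, hu1, hBΛΛ, hBΛu, ← ha]
          ring
        rw [expand, key1, key2]
        field_simp
        ring
      · -- old indices j ∈ S, j ≠ k
        have hjk : j ≠ k := fun h => hkS (h ▸ hjS)
        have h0 : B u (Λ j u) = 0 := hu2 j hjS
        have hcross : B (Λ k u) (Λ j u) = -(B u (Λ j (Λ k u))) := by
          rw [hΛsym k (u) (Λ j u), hanti k j (Ne.symm hjk)]
          simp
        have hlast : B (Λ k u) (Λ j (Λ k u)) = B u (Λ j u) := by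
          rw [hΛsym k u (Λ j (Λ k u)), hanti k j (Ne.symm hjk), map_neg, hsq]
          simp
        have hΛw' : Λ j (α • u + β • Λ k u) = α • Λ j u + β • Λ j (Λ k u) := by
          rw [map_add, map_smul, map_smul]
        rw [hΛw']
        simp only [map_add, map_smul, LinearMap.add_apply, LinearMap.smul_apply, smul_eq_mul]
        rw [hlast, h0]
        have : B (Λ k u) (Λ j u) = -(B u (Λ j (Λ k u))) := hcross
        rw [this]
        ring
end
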